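/- (Cross-ratio lower bound by the Vaidya local norm) For all points x, y in the interior of the bounded polytope K, the cross-ratio satisfies d_K(x, y) ≥ ‖x − y‖_{V_x} / √(2d). -/

import Mathlib

open Matrix MeasureTheory Real Set
open scoped ENNReal

noncomputable section

namespace PolytopeWalks

/-- Slackness `s_{x,i} = b_i − a_i^⊤ x`. -/
def slack {d m : ℕ} (A : Matrix (Fin m) (Fin d) ℝ) (b : Fin m → ℝ) (x : Fin d → ℝ)
    (i : Fin m) : ℝ :=
  b i - A.mulVec x i

/-- The polytope `K = {x : A x ≤ b}`. -/
def poly {d m : ℕ} (A : Matrix (Fin m) (Fin d) ℝ) (b : Fin m → ℝ) : Set (Fin d → ℝ) :=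
  {x | ∀ i, A.mulVec x i ≤ b i}

/-- The interior of the polytope: all slacks positive. -/
def interiorPoly {d m : ℕ} (A : Matrix (Fin m) (Fin d) ℝ) (b : Fin m → ℝ) :
    Set (Fin d → ℝ) :=
  {x | ∀ i, 0 < slack A b x i}

/-- Hessian of the logarithmic barrier, `∇²F_x = Σ_i a_i a_i^⊤ / s_{x,i}²`. -/
def logHess {d m : ℕ} (A : Matrix (Fin m) (Fin d) ℝ) (b : Fin m → ℝ) (x : Fin d → ℝ) :
    Matrix (Fin d) (Fin d) ℝ :=
  ∑ i : Fin m, ((slack A b x i) ^ 2)⁻¹ • vecMulVec (A i) (A i)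

/-- Leverage scores `σ_{x,i} = a_i^⊤ (∇²F_x)⁻¹ a_i / s_{x,i}²`. -/
def lev {d m : ℕ} (A : Matrix (Fin m) (Fin d) ℝ) (b : Fin m → ℝ) (x : Fin d → ℝ)
    (i : Fin m) : ℝ :=
  (A i) ⬝ᵥ ((logHess A b x)⁻¹ *ᵥ (A i)) / (slack A b x i) ^ 2

/-- The Vaidya matrix `V_x = Σ_i (σ_{x,i} + d/m) a_i a_i^⊤ / s_{x,i}²`. -/
def vaidyaMat {d m : ℕ} (A : Matrix (Fin m) (Fin d) ℝ) (b : Fin m → ℝ) (x : Fin d → ℝ) :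
    Matrix (Fin d) (Fin d) ℝ :=
  ∑ i : Fin m, ((lev A b x i + (d : ℝ) / m) / (slack A b x i) ^ 2) • vecMulVec (A i) (A i)

/-- Vaidya local norm `‖v‖_{V_x} = (v^⊤ V_x v)^{1/2}`. -/
def vNorm {d m : ℕ} (A : Matrix (Fin m) (Fin d) ℝ) (b : Fin m → ℝ) (x v : Fin d → ℝ) : ℝ :=
  Real.sqrt (v ⬝ᵥ (vaidyaMat A b x *ᵥ v))

/-- Vaidya slack sensitivities `θ_{x,i} = a_i^⊤ V_x⁻¹ a_i / s_{x,i}²`. -/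
def thetaV {d m : ℕ} (A : Matrix (Fin m) (Fin d) ℝ) (b : Fin m → ℝ) (x : Fin d → ℝ)
    (i : Fin m) : ℝ :=
  (A i) ⬝ᵥ ((vaidyaMat A b x)⁻¹ *ᵥ (A i)) / (slack A b x i) ^ 2

/-- The Euclidean norm on `Fin d → ℝ`. -/
def enorm2 {d : ℕ} (v : Fin d → ℝ) : ℝ := Real.sqrt (∑ i, v i ^ 2)

/-- Largest chord parameter: `sSup {t : x + t(y−x) ∈ closure K}`; `x + t₊(y−x)` is the
chord endpoint `e(y)` beyond `y`. -/
def chordSup {d : ℕ} (K : Set (Fin d → ℝ)) (x y : Fin d → ℝ) : ℝ :=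
  sSup {t : ℝ | x + t • (y - x) ∈ closure K}

/-- Smallest chord parameter: `sInf {t : x + t(y−x) ∈ closure K}`; `x + t₋(y−x)` is the
chord endpoint `e(x)` beyond `x`. -/
def chordInf {d : ℕ} (K : Set (Fin d → ℝ)) (x y : Fin d → ℝ) : ℝ :=
  sInf {t : ℝ | x + t • (y - x) ∈ closure K}

/-- The cross-ratio `d_K(x,y) = ‖e(x)−e(y)‖₂‖x−y‖₂ / (‖e(x)−x‖₂‖e(y)−y‖₂)`, where
`e(x), x, y, e(y)` lie in this order on the chord through `x` and `y`. -/
def crossRatio {d : ℕ} (K : Set (Fin d → ℝ)) (x y : Fin d → ℝ) : ℝ :=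
  enorm2 ((x + chordInf K x y • (y - x)) - (x + chordSup K x y • (y - x))) *
      enorm2 (x - y) /
    (enorm2 ((x + chordInf K x y • (y - x)) - x) *
      enorm2 ((x + chordSup K x y • (y - x)) - y))


/-! ### Auxiliary lemmas -/

lemma enorm2_smul {d : ℕ} (c : ℝ) (v : Fin d → ℝ) : enorm2 (c • v) = |c| * enorm2 v := by
  unfold enorm2
  rw [← Real.sqrt_sq_eq_abs, ← Real.sqrt_mul (sq_nonneg c), Finset.mul_sum]
  congr 1
  refine Finset.sum_congr rfl fun i _ => ?_
  simp [mul_pow]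

lemma enorm2_pos {d : ℕ} {v : Fin d → ℝ} (h : v ≠ 0) : 0 < enorm2 v := by
  apply Real.sqrt_pos.2
  obtain ⟨i, hi⟩ : ∃ i, v i ≠ 0 := by
    by_contra hc; push_neg at hc; exact h (funext hc)
  exact Finset.sum_pos' (fun j _ => sq_nonneg _) ⟨i, Finset.mem_univ i, by positivity⟩

lemma quadForm_sum {d m : ℕ} (A : Matrix (Fin m) (Fin d) ℝ) (w : Fin m → ℝ) (v : Fin d → ℝ) :
    v ⬝ᵥ ((∑ i, w i • vecMulVec (A i) (A i)) *ᵥ v) = ∑ i, w i * (A i ⬝ᵥ v) ^ 2 := by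
  simp only [dotProduct, mulVec, Matrix.sum_apply, Matrix.smul_apply, vecMulVec_apply,
    smul_eq_mul, Finset.sum_mul, Finset.mul_sum, pow_two]
  rw [show (∑ x : Fin d, ∑ x1 : Fin d, ∑ i : Fin m, v x * (w i * (A i x * A i x1) * v x1))
      = ∑ x : Fin d, ∑ i : Fin m, ∑ x1 : Fin d, v x * (w i * (A i x * A i x1) * v x1) from
      Finset.sum_congr rfl fun x _ => Finset.sum_comm, Finset.sum_comm]
  exact Finset.sum_congr rfl fun i _ => Finset.sum_congr rfl fun j _ =>
    Finset.sum_congr rfl fun k _ => by ring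

lemma dot_eq_trace {d : ℕ} (M : Matrix (Fin d) (Fin d) ℝ) (u : Fin d → ℝ) :
    u ⬝ᵥ (M *ᵥ u) = Matrix.trace (M * vecMulVec u u) := by
  simp only [Matrix.trace, Matrix.diag_apply, Matrix.mul_apply, vecMulVec_apply,
    dotProduct, mulVec, Finset.mul_sum]
  refine Finset.sum_congr rfl fun j _ => Finset.sum_congr rfl fun k _ => ?_
  ring

lemma mulVec_eq_zero_of_rank {d m : ℕ} (A : Matrix (Fin m) (Fin d) ℝ) (hrank : A.rank = d)
    {v : Fin d → ℝ} (hv : A.mulVec v = 0) : v = 0 := by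
  have h1 := LinearMap.finrank_range_add_finrank_ker A.mulVecLin
  rw [Matrix.rank] at hrank
  rw [hrank] at h1
  simp only [Module.finrank_pi, Fintype.card_fin] at h1
  have hker : Module.finrank ℝ (LinearMap.ker A.mulVecLin) = 0 := by omega
  have hbot : LinearMap.ker A.mulVecLin = ⊥ := Submodule.finrank_eq_zero.mp hker
  have hm : v ∈ LinearMap.ker A.mulVecLin := by
    simp [LinearMap.mem_ker, Matrix.mulVecLin_apply, hv]
  rw [hbot] at hm
  simpa using hm

lemma logHess_posDef {d m : ℕ} (A : Matrix (Fin m) (Fin d) ℝ) (b : Fin m → ℝ) (x : Fin d → ℝ)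
    (hrank : A.rank = d) (hx : ∀ i, 0 < slack A b x i) : (logHess A b x).PosDef := by
  refine Matrix.PosDef.of_dotProduct_mulVec_pos ?_ ?_
  · show (logHess A b x)ᴴ = logHess A b x
    ext j k
    simp only [logHess, Matrix.conjTranspose_apply, Matrix.sum_apply, Matrix.smul_apply,
      vecMulVec_apply, smul_eq_mul, star_sum, star_mul', star_trivial]
    exact Finset.sum_congr rfl fun i _ => by ring
  · intro v hv
    have hsv : star v = v := by simp
    rw [hsv, logHess, quadForm_sum]
    have hex : ∃ i, A i ⬝ᵥ v ≠ 0 := by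
      by_contra hc
      push_neg at hc
      exact hv (mulVec_eq_zero_of_rank A hrank (funext fun i => hc i))
    obtain ⟨i, hi⟩ := hex
    refine Finset.sum_pos' (fun j _ => by positivity) ⟨i, Finset.mem_univ i, ?_⟩
    have := (hx i).ne'
    positivity

lemma lev_nonneg {d m : ℕ} (A : Matrix (Fin m) (Fin d) ℝ) (b : Fin m → ℝ) (x : Fin d → ℝ)
    (hrank : A.rank = d) (hx : ∀ i, 0 < slack A b x i) (i : Fin m) : 0 ≤ lev A b x i := by
  have hpd := (logHess_posDef A b x hrank hx).inv
  have h0 := hpd.posSemidef.dotProduct_mulVec_nonneg (A i)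
  rw [show star (A i) = A i by simp] at h0
  exact div_nonneg h0 (sq_nonneg _)

lemma lev_sum {d m : ℕ} (A : Matrix (Fin m) (Fin d) ℝ) (b : Fin m → ℝ) (x : Fin d → ℝ)
    (hrank : A.rank = d) (hx : ∀ i, 0 < slack A b x i) :
    ∑ i, lev A b x i = d := by
  have hpd := logHess_posDef A b x hrank hx
  have hdet : IsUnit (logHess A b x).det := hpd.det_pos.ne'.isUnit
  calc ∑ i, lev A b x i
      = ∑ i, Matrix.trace
          ((logHess A b x)⁻¹ * (((slack A b x i)^2)⁻¹ • vecMulVec (A i) (A i))) := by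
        refine Finset.sum_congr rfl fun i _ => ?_
        rw [Matrix.mul_smul, Matrix.trace_smul, ← dot_eq_trace, lev, div_eq_inv_mul]
        simp [smul_eq_mul]
    _ = Matrix.trace ((logHess A b x)⁻¹ * logHess A b x) := by
        rw [logHess, Finset.mul_sum, Matrix.trace_sum]
    _ = (d : ℝ) := by rw [Matrix.nonsing_inv_mul _ hdet, Matrix.trace_one]; simp

set_option maxHeartbeats 1600000 in
/-- Cross-ratio lower bound by the Vaidya local norm: for all interior points `x, y` of
the bounded polytope `K`, `d_K(x,y) ≥ ‖x−y‖_{V_x}/√(2d)`. -/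
theorem cross_ratio_lower_bound (d m : ℕ) (hd : 0 < d) (hdm : d ≤ m)
    (A : Matrix (Fin m) (Fin d) ℝ) (b : Fin m → ℝ) (hrank : A.rank = d)
    (hbd : Bornology.IsBounded (poly A b))
    (x y : Fin d → ℝ) (hx : x ∈ interiorPoly A b) (hy : y ∈ interiorPoly A b) :
    vNorm A b x (x - y) / Real.sqrt (2 * d) ≤ crossRatio (poly A b) x y := by
  classical
  by_cases hxy : x = y
  · subst hxy
    simp [vNorm, crossRatio, enorm2, sub_self]
  have hm0 : 0 < m := lt_of_lt_of_le hd hdm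
  have hK : IsClosed (poly A b) := by
    have hpoly : poly A b = ⋂ i, {z : Fin d → ℝ | A.mulVec z i ≤ b i} := by
      ext z; simp [poly, Set.mem_iInter]
    rw [hpoly]
    refine isClosed_iInter fun i => ?_
    have hcont : Continuous fun z : Fin d → ℝ => A.mulVec z i := by
      simp only [Matrix.mulVec, dotProduct]
      exact continuous_finset_sum _ fun j _ => continuous_const.mul (continuous_apply j)
    exact isClosed_le hcont continuous_const
  set S : Set ℝ := {t : ℝ | x + t • (y - x) ∈ closure (poly A b)} with hS
  set c : Fin m → ℝ := fun i => A.mulVec (y - x) i with hc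
  set s : Fin m → ℝ := slack A b x with hsx
  have hs : ∀ i, 0 < s i := hx
  have hmemS : ∀ t : ℝ, t ∈ S ↔ ∀ i, t * c i ≤ s i := by
    intro t
    rw [hS, Set.mem_setOf_eq, hK.closure_eq]
    constructor
    · intro h i
      have h2 := h i
      rw [Matrix.mulVec_add, Matrix.mulVec_smul] at h2
      simp only [Pi.add_apply, Pi.smul_apply, smul_eq_mul] at h2
      simp only [hsx, slack, hc]
      linarith
    · intro h i
      rw [Matrix.mulVec_add, Matrix.mulVec_smul]
      simp only [Pi.add_apply, Pi.smul_apply, smul_eq_mul]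
      have h2 := h i
      simp only [hsx, slack, hc] at h2
      linarith
  have hcs : ∀ i, s i - c i = slack A b y i := by
    intro i
    simp only [hsx, slack, hc, Matrix.mulVec_sub, Pi.sub_apply]
    ring
  have h0S : (0 : ℝ) ∈ S := (hmemS 0).2 fun i => by simpa using (hs i).le
  have h1S : (1 : ℝ) ∈ S := (hmemS 1).2 fun i => by
    have h2 := hy i; rw [← hcs i] at h2; linarith
  have hSne : S.Nonempty := ⟨0, h0S⟩
  have hyx : y - x ≠ 0 := sub_ne_zero.2 (Ne.symm hxy)
  have hyxn : 0 < ‖y - x‖ := norm_pos_iff.2 hyx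
  obtain ⟨C, hC⟩ := isBounded_iff_forall_norm_le.1 hbd
  have hSbd : ∀ t ∈ S, |t| ≤ (C + ‖x‖) / ‖y - x‖ := by
    intro t ht
    rw [hS, Set.mem_setOf_eq, hK.closure_eq] at ht
    have h1 : ‖x + t • (y - x)‖ ≤ C := hC _ ht
    have h2 : ‖t • (y - x)‖ ≤ C + ‖x‖ := by
      have h3 : t • (y - x) = (x + t • (y - x)) - x := (add_sub_cancel_left x _).symm
      rw [h3]
      calc ‖(x + t • (y - x)) - x‖ ≤ ‖x + t • (y - x)‖ + ‖x‖ := norm_sub_le _ _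
        _ ≤ C + ‖x‖ := by linarith
    rw [norm_smul, Real.norm_eq_abs] at h2
    rw [le_div_iff₀ hyxn]
    exact h2
  have hbddA : BddAbove S := ⟨(C + ‖x‖) / ‖y - x‖, fun t ht => (le_abs_self t).trans (hSbd t ht)⟩
  have hbddB : BddBelow S := ⟨-((C + ‖x‖) / ‖y - x‖), fun t ht =>
    neg_le_of_neg_le ((neg_le_abs t).trans (hSbd t ht))⟩
  set tp : ℝ := chordSup (poly A b) x y with htp
  set tm : ℝ := chordInf (poly A b) x y with htm
  have htpS : tp = sSup S := by rw [htp, hS]; rfl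
  have htmS : tm = sInf S := by rw [htm, hS]; rfl
  have hFm : (Finset.univ : Finset (Fin m)).Nonempty := ⟨⟨0, hm0⟩, Finset.mem_univ _⟩
  have htp1 : 1 < tp := by
    set ε : ℝ := Finset.univ.inf' hFm (fun i => slack A b y i / (|c i| + 1)) with hε
    have hε0 : 0 < ε := by
      rw [hε, Finset.lt_inf'_iff]
      intro i _
      have h2 := hy i
      positivity
    have hmem : (1 + ε) ∈ S := by
      rw [hmemS]
      intro i
      have hle : ε ≤ slack A b y i / (|c i| + 1) := Finset.inf'_le _ (Finset.mem_univ i)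
      have habs : 0 < |c i| + 1 := by positivity
      have h3 : ε * (|c i| + 1) ≤ slack A b y i := by
        rw [← le_div_iff₀ habs]; exact hle
      have h4 : ε * c i ≤ ε * (|c i| + 1) := by
        have h5 : c i ≤ |c i| + 1 := (le_abs_self _).trans (by linarith [abs_nonneg (c i)])
        exact mul_le_mul_of_nonneg_left h5 hε0.le
      rw [← hcs i] at h3
      nlinarith
    have h6 := le_csSup hbddA hmem
    rw [← htpS] at h6
    linarith
  have htm0 : tm < 0 := by
    set ε : ℝ := Finset.univ.inf' hFm (fun i => s i / (|c i| + 1)) with hε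
    have hε0 : 0 < ε := by
      rw [hε, Finset.lt_inf'_iff]
      intro i _
      have h2 := hs i
      positivity
    have hmem : (-ε) ∈ S := by
      rw [hmemS]
      intro i
      have hle : ε ≤ s i / (|c i| + 1) := Finset.inf'_le _ (Finset.mem_univ i)
      have habs : 0 < |c i| + 1 := by positivity
      have h3 : ε * (|c i| + 1) ≤ s i := by
        rw [← le_div_iff₀ habs]; exact hle
      have h4 : -ε * c i ≤ ε * (|c i| + 1) := by
        have h5 : -(c i) ≤ |c i| + 1 := (neg_le_abs _).trans (by linarith [abs_nonneg (c i)])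
        nlinarith
      linarith
    have h6 := csInf_le hbddB hmem
    rw [← htmS] at h6
    linarith
  have htple : ∀ i, tp * c i ≤ s i := by
    intro i
    rcases lt_trichotomy (c i) 0 with hci | hci | hci
    · nlinarith [hs i]
    · simp only [hci, mul_zero]; exact (hs i).le
    · have hub : tp ≤ s i / c i := by
        rw [htpS]
        refine csSup_le hSne fun t ht => ?_
        rw [le_div_iff₀ hci]
        exact (hmemS t).1 ht i
      rw [← le_div_iff₀ hci]
      exact hub
  have htmle : ∀ i, tm * c i ≤ s i := by
    intro i
    rcases lt_trichotomy (c i) 0 with hci | hci | hci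
    · have hlb : s i / c i ≤ tm := by
        rw [htmS]
        refine le_csInf hSne fun t ht => ?_
        rw [div_le_iff_of_neg hci]
        exact (hmemS t).1 ht i
      rw [div_le_iff_of_neg hci] at hlb
      exact hlb
    · simp only [hci, mul_zero]; exact (hs i).le
    · nlinarith [hs i]
  -- compute the cross ratio
  set N : ℝ := enorm2 (y - x) with hN
  have hN0 : 0 < N := enorm2_pos hyx
  have e1 : (x + tm • (y - x)) - (x + tp • (y - x)) = (tm - tp) • (y - x) := by
    ext j
    simp only [Pi.sub_apply, Pi.add_apply, Pi.smul_apply, smul_eq_mul]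
    ring
  have e2 : x - y = (-1 : ℝ) • (y - x) := by
    ext j
    simp only [Pi.sub_apply, Pi.smul_apply, smul_eq_mul]
    ring
  have e3 : (x + tm • (y - x)) - x = tm • (y - x) := by
    ext j
    simp only [Pi.sub_apply, Pi.add_apply, Pi.smul_apply, smul_eq_mul]
    ring
  have e4 : (x + tp • (y - x)) - y = (tp - 1) • (y - x) := by
    ext j
    simp only [Pi.sub_apply, Pi.add_apply, Pi.smul_apply, smul_eq_mul]
    ring
  set D : ℝ := (tp - tm) / ((-tm) * (tp - 1)) with hDd
  have hD0 : 0 < D := by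
    rw [hDd]
    have h1 : 0 < -tm := by linarith
    have h2 : 0 < tp - 1 := by linarith
    have h3 : 0 < tp - tm := by linarith
    positivity
  have hD : crossRatio (poly A b) x y = D := by
    simp only [crossRatio]
    rw [← htm, ← htp, e1, e2, e3, e4, enorm2_smul, enorm2_smul, enorm2_smul, enorm2_smul, ← hN]
    rw [abs_of_nonpos (by linarith : tm - tp ≤ 0), abs_of_nonpos (by linarith : tm ≤ 0),
      abs_of_nonneg (by linarith : (0:ℝ) ≤ tp - 1)]
    rw [show |(-1 : ℝ)| = 1 by norm_num]
    rw [hDd]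
    rw [show (-(tm - tp) * N) * (1 * N) = (tp - tm) * (N * N) by ring,
      show (-tm * N) * ((tp - 1) * N) = (-tm * (tp - 1)) * (N * N) by ring,
      mul_div_mul_right _ _ (by positivity : N * N ≠ 0)]
  -- per-constraint bound
  have hkey : ∀ i, (c i) ^ 2 ≤ (s i) ^ 2 * D ^ 2 := by
    intro i
    have hpq : 0 < (-tm) * (tp - 1) := by
      have h1 : 0 < -tm := by linarith
      have h2 : 0 < tp - 1 := by linarith
      positivity
    have habs : |c i| ≤ s i * D := by
      have hmul : |c i| * ((-tm) * (tp - 1)) ≤ s i * (tp - tm) := by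
        rcases lt_trichotomy (c i) 0 with hci | hci | hci
        · rw [abs_of_neg hci]
          have h1 : (-tm) * (-(c i)) ≤ s i := by nlinarith [htmle i]
          nlinarith [mul_le_mul_of_nonneg_right h1 (by linarith : (0:ℝ) ≤ tp - 1),
            mul_nonneg (hs i).le (by linarith : (0:ℝ) ≤ -tm), hs i]
        · rw [hci]
          simp only [abs_zero, zero_mul]
          nlinarith [hs i]
        · rw [abs_of_pos hci]
          have h1 : tp * c i ≤ s i := htple i
          nlinarith [mul_le_mul_of_nonneg_left h1 (by linarith : (0:ℝ) ≤ -tm),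
            mul_pos hci (by linarith : (0:ℝ) < -tm), mul_nonneg (hs i).le (by linarith : (0:ℝ) ≤ tp)]
      rw [hDd, mul_div_assoc']
      rw [le_div_iff₀ hpq]
      exact hmul
    calc (c i) ^ 2 = |c i| ^ 2 := (sq_abs _).symm
      _ ≤ (s i * D) ^ 2 := pow_le_pow_left₀ (abs_nonneg _) habs 2
      _ = (s i) ^ 2 * D ^ 2 := by ring
  -- the quadratic form bound
  have hAc : ∀ i, (A i ⬝ᵥ (x - y)) ^ 2 = (c i) ^ 2 := by
    intro i
    have h1 : A i ⬝ᵥ (x - y) = -(c i) := by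
      have h2 : x - y = -(y - x) := by rw [neg_sub]
      rw [h2, dotProduct_neg]
      rfl
    rw [h1]
    ring
  have hQ : (x - y) ⬝ᵥ (vaidyaMat A b x *ᵥ (x - y))
      = ∑ i, ((lev A b x i + (d : ℝ) / m) / (s i) ^ 2) * (c i) ^ 2 := by
    rw [vaidyaMat, quadForm_sum]
    exact Finset.sum_congr rfl fun i _ => by rw [hAc i, hsx]
  have hβ : (0 : ℝ) ≤ (d : ℝ) / m := by positivity
  have hlev : ∀ i, 0 ≤ lev A b x i := lev_nonneg A b x hrank hx
  have hQle : (x - y) ⬝ᵥ (vaidyaMat A b x *ᵥ (x - y)) ≤ 2 * d * D ^ 2 := by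
    rw [hQ]
    have hterm : ∀ i ∈ Finset.univ, ((lev A b x i + (d : ℝ) / m) / (s i) ^ 2) * (c i) ^ 2
        ≤ (lev A b x i + (d : ℝ) / m) * D ^ 2 := by
      intro i _
      have hL : 0 ≤ lev A b x i + (d : ℝ) / m := add_nonneg (hlev i) hβ
      have hs2 : (0 : ℝ) < (s i) ^ 2 := by have := hs i; positivity
      calc ((lev A b x i + (d : ℝ) / m) / (s i) ^ 2) * (c i) ^ 2
          ≤ ((lev A b x i + (d : ℝ) / m) / (s i) ^ 2) * ((s i) ^ 2 * D ^ 2) :=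
            mul_le_mul_of_nonneg_left (hkey i) (div_nonneg hL hs2.le)
        _ = (lev A b x i + (d : ℝ) / m) * D ^ 2 := by have := (hs i).ne'; field_simp
    calc ∑ i, ((lev A b x i + (d : ℝ) / m) / (s i) ^ 2) * (c i) ^ 2
        ≤ ∑ i, (lev A b x i + (d : ℝ) / m) * D ^ 2 := Finset.sum_le_sum hterm
      _ = (∑ i, (lev A b x i + (d : ℝ) / m)) * D ^ 2 := by rw [Finset.sum_mul]
      _ = 2 * d * D ^ 2 := by
          rw [Finset.sum_add_distrib, lev_sum A b x hrank hx, Finset.sum_const,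
            Finset.card_univ, Fintype.card_fin, nsmul_eq_mul]
          have hmne : (m : ℝ) ≠ 0 := Nat.cast_ne_zero.2 hm0.ne'
          field_simp
          ring
  -- conclusion
  have hsqrt2d : 0 < Real.sqrt (2 * d) := by
    apply Real.sqrt_pos.2
    have : (0 : ℝ) < d := by exact_mod_cast hd
    linarith
  rw [hD, div_le_iff₀ hsqrt2d]
  have hv : vNorm A b x (x - y) ≤ Real.sqrt (2 * d) * D := by
    rw [vNorm]
    calc Real.sqrt ((x - y) ⬝ᵥ (vaidyaMat A b x *ᵥ (x - y)))
        ≤ Real.sqrt (2 * d * D ^ 2) := Real.sqrt_le_sqrt hQle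
      _ = Real.sqrt (2 * d) * D := by
          rw [Real.sqrt_mul (by positivity), Real.sqrt_sq hD0.le]
  linarith [hv]

end PolytopeWalks
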